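/- Let U ⊆ ℂ be a nonempty bounded open set. Let u : ℂ → ℝ be continuous on the closure of U and twice continuously differentiable on U, and let K : ℂ → ℝ be continuous on the closure of U with K(z) ≥ 0 for all z ∈ U. Assume that Δu(z) = K(z)·sinh(u(z)/2) for all z ∈ U, and that u(z) < 0 for every z in the topological frontier of U. Then u(z) < 0 for every z ∈ U. -/

import Mathlib

/-- The Euclidean Laplacian of a function `u : ℂ → ℝ`, where `ℂ` is regarded as a
two-dimensional real inner product space: `Δu = ∂²u/∂x² + ∂²u/∂y²`. -/
noncomputable def laplacian (u : ℂ → ℝ) (z : ℂ) : ℝ :=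
  fderiv ℝ (fun w => fderiv ℝ u w 1) z 1 +
    fderiv ℝ (fun w => fderiv ℝ u w Complex.I) z Complex.I

open Metric Set Filter Topology

section Helpers

lemma second_deriv_test {g φ : ℝ → ℝ} {a : ℝ}
    (hg : ∀ᶠ t in 𝓝 (0:ℝ), HasDerivAt g (φ t) t)
    (hφ : HasDerivAt φ a 0) (hmax : IsLocalMax g 0) : a ≤ 0 := by
  by_contra hpos
  push_neg at hpos
  have hφ0 : φ 0 = 0 := hmax.hasDerivAt_eq_zero hg.self_of_nhds
  have hslope : Tendsto (slope φ 0) (𝓝[>] (0:ℝ)) (𝓝 a) :=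
    (hasDerivAt_iff_tendsto_slope.mp hφ).mono_left
      (nhdsWithin_mono 0 (fun t ht => ne_of_gt ht))
  have hev : ∀ᶠ t in 𝓝[>] (0:ℝ), 0 < slope φ 0 t := hslope.eventually_const_lt hpos
  have hφpos : ∀ᶠ t in 𝓝[>] (0:ℝ), 0 < φ t := by
    filter_upwards [hev, self_mem_nhdsWithin] with t ht ht'
    have hs : slope φ 0 t = φ t / t := by simp [slope, hφ0, div_eq_inv_mul]
    rw [hs] at ht
    exact (div_pos_iff.mp ht).resolve_right
      (fun h => absurd h.2 (not_lt.mpr (le_of_lt ht'))) |>.1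
  obtain ⟨ε₁, hε₁, h₁⟩ := Metric.eventually_nhds_iff.mp hg
  obtain ⟨ε₃, hε₃, h₃⟩ := Metric.eventually_nhds_iff.mp hmax
  obtain ⟨ε₂, hε₂, h₂⟩ := mem_nhdsGT_iff_exists_Ioc_subset.mp hφpos
  rw [mem_Ioi] at hε₂
  obtain ⟨η, hηpos, hη1, hη2, hη3⟩ : ∃ η : ℝ, 0 < η ∧ η < ε₁ ∧ η < ε₃ ∧ η ≤ ε₂ := by
    refine ⟨min (min ε₁ ε₃) ε₂ / 2, by positivity, ?_, ?_, ?_⟩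
    · have h := min_le_left (min ε₁ ε₃) ε₂; have := min_le_left ε₁ ε₃; linarith
    · have h := min_le_left (min ε₁ ε₃) ε₂; have := min_le_right ε₁ ε₃; linarith
    · have h := min_le_right (min ε₁ ε₃) ε₂; linarith
  have hderiv : ∀ t ∈ Icc (0:ℝ) η, HasDerivAt g (φ t) t := by
    intro t ht
    apply h₁
    rw [Real.dist_eq, sub_zero, abs_of_nonneg ht.1]
    linarith [ht.2]
  have hcont : ContinuousOn g (Icc 0 η) := fun t ht =>
    ((hderiv t ht).continuousAt).continuousWithinAt
  have hmono : StrictMonoOn g (Icc 0 η) := by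
    apply strictMonoOn_of_deriv_pos (convex_Icc 0 η) hcont
    intro t ht
    rw [interior_Icc] at ht
    rw [(hderiv t ⟨le_of_lt ht.1, le_of_lt ht.2⟩).deriv]
    exact h₂ ⟨ht.1, le_trans (le_of_lt ht.2) hη3⟩
  have hle : g η ≤ g 0 := by
    apply h₃
    rw [Real.dist_eq, sub_zero, abs_of_nonneg hηpos.le]
    exact hη2
  have := hmono (left_mem_Icc.mpr hηpos.le) (right_mem_Icc.mpr hηpos.le) hηpos
  linarith

lemma diff_fderiv_apply {f : ℂ → ℝ} {U : Set ℂ} (hU : IsOpen U) (hf : ContDiffOn ℝ 2 f U)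
    {z : ℂ} (hz : z ∈ U) (e : ℂ) :
    DifferentiableAt ℝ (fun w => fderiv ℝ f w e) z := by
  have h1 : ContDiffAt ℝ 2 f z := hf.contDiffAt (hU.mem_nhds hz)
  have h2 : ContDiffAt ℝ 1 (fderiv ℝ f) z := h1.fderiv_right (by norm_num)
  exact ((ContinuousLinearMap.apply ℝ ℝ e).contDiff.comp_contDiffAt z h2).differentiableAt (by norm_num)

lemma laplacian_nonpos_dir {f : ℂ → ℝ} {U : Set ℂ} (hU : IsOpen U) (hf : ContDiffOn ℝ 2 f U)
    {z : ℂ} (hz : z ∈ U) (hmax : IsLocalMax f z) (e : ℂ) :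
    fderiv ℝ (fun w => fderiv ℝ f w e) z e ≤ 0 := by
  set L : ℝ → ℂ := fun t => z + t • e with hL
  have hLc : Continuous L := by continuity
  have hL0 : L 0 = z := by simp [hL]
  have hLd : ∀ t : ℝ, HasDerivAt L e t := fun t => by
    simpa [hL] using ((hasDerivAt_id t).smul_const e).const_add z
  have hmem : ∀ᶠ t in 𝓝 (0:ℝ), L t ∈ U := by
    have : Tendsto L (𝓝 0) (𝓝 z) := by rw [← hL0]; exact hLc.continuousAt
    exact this.eventually (hU.eventually_mem hz)
  have hg : ∀ᶠ t in 𝓝 (0:ℝ), HasDerivAt (fun s => f (L s)) (fderiv ℝ f (L t) e) t := by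
    filter_upwards [hmem] with t ht
    have hd : DifferentiableAt ℝ f (L t) :=
      (hf.contDiffAt (hU.mem_nhds ht)).differentiableAt (by norm_num)
    exact hd.hasFDerivAt.comp_hasDerivAt t (hLd t)
  have hφ : HasDerivAt (fun t => fderiv ℝ f (L t) e)
      (fderiv ℝ (fun w => fderiv ℝ f w e) z e) 0 := by
    have hd : DifferentiableAt ℝ (fun w => fderiv ℝ f w e) z := diff_fderiv_apply hU hf hz e
    have hd' : HasFDerivAt (fun w => fderiv ℝ f w e)
        (fderiv ℝ (fun w => fderiv ℝ f w e) z) (L 0) := by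
      rw [hL0]; exact hd.hasFDerivAt
    exact hd'.comp_hasDerivAt 0 (hLd 0)
  have hmax' : IsLocalMax (fun s => f (L s)) 0 := by
    have hT : Tendsto L (𝓝 0) (𝓝 z) := by rw [← hL0]; exact hLc.continuousAt
    have h2 := hT.eventually hmax
    unfold IsLocalMax IsMaxFilter
    simpa [hL0] using h2
  exact second_deriv_test hg hφ hmax'

lemma laplacian_nonpos {f : ℂ → ℝ} {U : Set ℂ} (hU : IsOpen U) (hf : ContDiffOn ℝ 2 f U)
    {z : ℂ} (hz : z ∈ U) (hmax : IsLocalMax f z) : laplacian f z ≤ 0 := by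
  have h1 := laplacian_nonpos_dir hU hf hz hmax 1
  have h2 := laplacian_nonpos_dir hU hf hz hmax Complex.I
  unfold laplacian
  linarith

lemma fderiv_dir_add {f g : ℂ → ℝ} {U : Set ℂ} (hU : IsOpen U) (hf : ContDiffOn ℝ 2 f U)
    (hg : ContDiffOn ℝ 2 g U) {z : ℂ} (hz : z ∈ U) (e e' : ℂ) :
    fderiv ℝ (fun w => fderiv ℝ (fun x => f x + g x) w e) z e'
      = fderiv ℝ (fun w => fderiv ℝ f w e) z e' + fderiv ℝ (fun w => fderiv ℝ g w e) z e' := by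
  have hev : (fun w => fderiv ℝ (fun x => f x + g x) w e)
      =ᶠ[𝓝 z] (fun w => fderiv ℝ f w e + fderiv ℝ g w e) := by
    filter_upwards [hU.eventually_mem hz] with w hw
    have hdf : DifferentiableAt ℝ f w :=
      (hf.contDiffAt (hU.mem_nhds hw)).differentiableAt (by norm_num)
    have hdg : DifferentiableAt ℝ g w :=
      (hg.contDiffAt (hU.mem_nhds hw)).differentiableAt (by norm_num)
    rw [fderiv_fun_add hdf hdg]
    simp
  rw [hev.fderiv_eq, fderiv_fun_add (diff_fderiv_apply hU hf hz e) (diff_fderiv_apply hU hg hz e)]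
  simp

lemma laplacian_add {f g : ℂ → ℝ} {U : Set ℂ} (hU : IsOpen U) (hf : ContDiffOn ℝ 2 f U)
    (hg : ContDiffOn ℝ 2 g U) {z : ℂ} (hz : z ∈ U) :
    laplacian (fun x => f x + g x) z = laplacian f z + laplacian g z := by
  unfold laplacian
  rw [fderiv_dir_add hU hf hg hz 1 1, fderiv_dir_add hU hf hg hz Complex.I Complex.I]
  ring

lemma laplacian_const_mul {g : ℂ → ℝ} {U : Set ℂ} (hU : IsOpen U) (hg : ContDiffOn ℝ 2 g U)
    {z : ℂ} (hz : z ∈ U) (c : ℝ) :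
    laplacian (fun x => c * g x) z = c * laplacian g z := by
  have key : ∀ e : ℂ, fderiv ℝ (fun w => fderiv ℝ (fun x => c * g x) w e) z e
      = c * fderiv ℝ (fun w => fderiv ℝ g w e) z e := by
    intro e
    have hev : (fun w => fderiv ℝ (fun x => c * g x) w e)
        =ᶠ[𝓝 z] (fun w => c * fderiv ℝ g w e) := by
      filter_upwards [hU.eventually_mem hz] with w hw
      have hdg : DifferentiableAt ℝ g w :=
        (hg.contDiffAt (hU.mem_nhds hw)).differentiableAt (by norm_num)
      rw [fderiv_const_mul hdg c]
      simp
    rw [hev.fderiv_eq, fderiv_const_mul (diff_fderiv_apply hU hg hz e) c]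
    simp
  unfold laplacian
  rw [key 1, key Complex.I]
  ring

lemma resq_hasfderiv (w : ℂ) :
    HasFDerivAt (fun x : ℂ => x.re * x.re)
      (w.re • (Complex.reCLM : ℂ →L[ℝ] ℝ) + w.re • (Complex.reCLM : ℂ →L[ℝ] ℝ)) w :=
  (Complex.reCLM.hasFDerivAt (x := w)).mul (Complex.reCLM.hasFDerivAt (x := w))

lemma contdiff_resq : ContDiff ℝ 2 (fun x : ℂ => x.re * x.re) :=
  (Complex.reCLM.contDiff (n := 2)).mul (Complex.reCLM.contDiff (n := 2))

lemma laplacian_re_sq (z : ℂ) : laplacian (fun x : ℂ => x.re * x.re) z = 2 := by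
  have h1 : (fun w => fderiv ℝ (fun x : ℂ => x.re * x.re) w 1) = fun w : ℂ => w.re + w.re := by
    funext w
    rw [(resq_hasfderiv w).fderiv]
    simp
  have h2 : (fun w => fderiv ℝ (fun x : ℂ => x.re * x.re) w Complex.I) = fun _ : ℂ => (0:ℝ) := by
    funext w
    rw [(resq_hasfderiv w).fderiv]
    simp
  unfold laplacian
  rw [h1, h2]
  have h3 : HasFDerivAt (fun w : ℂ => w.re + w.re)
      ((Complex.reCLM : ℂ →L[ℝ] ℝ) + (Complex.reCLM : ℂ →L[ℝ] ℝ)) z :=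
    (Complex.reCLM.hasFDerivAt (x := z)).add (Complex.reCLM.hasFDerivAt (x := z))
  rw [h3.fderiv, fderiv_fun_const]
  simp
  norm_num

end Helpers

section Barrier

def Sfun (p : ℂ) (w : ℂ) : ℝ :=
  (w.re - p.re) * (w.re - p.re) + (w.im - p.im) * (w.im - p.im)

lemma Sfun_pos (p : ℂ) {z : ℂ} (hz : z ≠ p) : 0 < Sfun p z := by
  unfold Sfun
  have hnn : (0:ℝ) ≤ (z.re - p.re) * (z.re - p.re) + (z.im - p.im) * (z.im - p.im) := by
    nlinarith [mul_self_nonneg (z.re - p.re), mul_self_nonneg (z.im - p.im)]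
  rcases lt_or_eq_of_le hnn with h | h
  · exact h
  · exfalso
    apply hz
    apply Complex.ext <;>
      nlinarith [mul_self_nonneg (z.re - p.re), mul_self_nonneg (z.im - p.im)]

lemma Sfun_eq_dist (p z : ℂ) : Sfun p z = dist z p * dist z p := by
  have h1 : ‖z - p‖ * ‖z - p‖ = Complex.normSq (z - p) := by
    rw [← Complex.sq_norm]; ring
  rw [Complex.dist_eq, h1]
  simp [Complex.normSq_apply, Sfun]

lemma Sfun_contDiff (p : ℂ) : ContDiff ℝ 2 (Sfun p) := by
  unfold Sfun
  exact (((Complex.reCLM.contDiff (n:=2)).sub contDiff_const).mul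
    ((Complex.reCLM.contDiff (n:=2)).sub contDiff_const)).add
    (((Complex.imCLM.contDiff (n:=2)).sub contDiff_const).mul
    ((Complex.imCLM.contDiff (n:=2)).sub contDiff_const))

lemma Sfun_hasFDerivAt (p w : ℂ) :
    HasFDerivAt (Sfun p)
      (((w.re - p.re) • (Complex.reCLM : ℂ →L[ℝ] ℝ) + (w.re - p.re) • (Complex.reCLM : ℂ →L[ℝ] ℝ)) +
       ((w.im - p.im) • (Complex.imCLM : ℂ →L[ℝ] ℝ) + (w.im - p.im) • (Complex.imCLM : ℂ →L[ℝ] ℝ))) w :=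
  ((Complex.reCLM.hasFDerivAt.sub_const p.re).mul
      (Complex.reCLM.hasFDerivAt.sub_const p.re)).add
    ((Complex.imCLM.hasFDerivAt.sub_const p.im).mul
      (Complex.imCLM.hasFDerivAt.sub_const p.im))

noncomputable def LSp (p w : ℂ) : ℂ →L[ℝ] ℝ :=
  ((w.re - p.re) • (Complex.reCLM : ℂ →L[ℝ] ℝ) + (w.re - p.re) • (Complex.reCLM : ℂ →L[ℝ] ℝ)) +
    ((w.im - p.im) • (Complex.imCLM : ℂ →L[ℝ] ℝ) + (w.im - p.im) • (Complex.imCLM : ℂ →L[ℝ] ℝ))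

lemma LSp_apply (p w e : ℂ) :
    LSp p w e = 2 * (w.re - p.re) * e.re + 2 * (w.im - p.im) * e.im := by
  simp [LSp]
  ring

lemma Sfun_hasFDerivAt' (p w : ℂ) : HasFDerivAt (Sfun p) (LSp p w) w := Sfun_hasFDerivAt p w

noncomputable def hbar (p : ℂ) (c : ℝ) (w : ℂ) : ℝ := (Sfun p w)⁻¹ - c

lemma hbar_contDiffOn (p : ℂ) (c : ℝ) : ContDiffOn ℝ 2 (hbar p c) {p}ᶜ := by
  unfold hbar
  exact (((Sfun_contDiff p).contDiffOn).inv
    (fun x hx => (Sfun_pos p hx).ne')).sub contDiffOn_const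

lemma hbar_hasFDerivAt (p : ℂ) (c : ℝ) {w : ℂ} (hw : w ≠ p) :
    HasFDerivAt (hbar p c) ((-((Sfun p w)^2)⁻¹) • LSp p w) w := by
  have h0 : HasDerivAt (fun t : ℝ => t⁻¹) (-((Sfun p w)^2)⁻¹) (Sfun p w) :=
    hasDerivAt_inv (Sfun_pos p hw).ne'
  exact (h0.comp_hasFDerivAt w (Sfun_hasFDerivAt' p w)).sub_const c

lemma hbar_fderiv_apply (p : ℂ) (c : ℝ) {w : ℂ} (hw : w ≠ p) (e : ℂ) :
    fderiv ℝ (hbar p c) w e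
      = -((Sfun p w)^2)⁻¹ * (2 * (w.re - p.re) * e.re + 2 * (w.im - p.im) * e.im) := by
  rw [(hbar_hasFDerivAt p c hw).fderiv]
  rw [ContinuousLinearMap.smul_apply, LSp_apply]
  simp

lemma A_hasFDerivAt (p : ℂ) {w : ℂ} (hw : w ≠ p) :
    HasFDerivAt (fun x => -((Sfun p x)^2)⁻¹)
      ((2 * Sfun p w / ((Sfun p w)^2)^2) • LSp p w) w := by
  have h0 : HasDerivAt (fun t : ℝ => -(t^2)⁻¹) (2 * Sfun p w / ((Sfun p w)^2)^2) (Sfun p w) := by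
    have h1 := ((hasDerivAt_pow 2 (Sfun p w)).inv (pow_ne_zero 2 (Sfun_pos p hw).ne')).neg
    refine h1.congr_deriv ?_
    push_cast
    ring
  exact h0.comp_hasFDerivAt w (Sfun_hasFDerivAt' p w)

lemma laplacian_hbar (p : ℂ) (c : ℝ) {z : ℂ} (hz : z ≠ p) :
    laplacian (hbar p c) z = 4 * ((Sfun p z)^2)⁻¹ := by
  have hSpos := Sfun_pos p hz
  have hSne : Sfun p z ≠ 0 := hSpos.ne'
  have hopen : ∀ᶠ w in 𝓝 z, w ∈ ({p}ᶜ : Set ℂ) :=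
    isOpen_compl_singleton.eventually_mem hz
  have hB1 : HasFDerivAt (fun w : ℂ => 2 * (w.re - p.re))
      ((2:ℝ) • (Complex.reCLM : ℂ →L[ℝ] ℝ)) z :=
    (Complex.reCLM.hasFDerivAt.sub_const p.re).const_mul 2
  have hM1 := (A_hasFDerivAt p hz).fun_mul hB1
  have hev1 : (fun w => fderiv ℝ (hbar p c) w 1)
      =ᶠ[𝓝 z] (fun w => -((Sfun p w)^2)⁻¹ * (2 * (w.re - p.re))) := by
    filter_upwards [hopen] with w hw
    rw [hbar_fderiv_apply p c hw 1]
    simp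
  have hterm1 : fderiv ℝ (fun w => fderiv ℝ (hbar p c) w 1) z 1
      = -((Sfun p z)^2)⁻¹ * 2
        + (2 * (z.re - p.re)) * ((2 * Sfun p z / ((Sfun p z)^2)^2) * (2 * (z.re - p.re))) := by
    rw [hev1.fderiv_eq, hM1.fderiv]
    simp only [ContinuousLinearMap.add_apply, ContinuousLinearMap.smul_apply, LSp_apply,
      smul_eq_mul, Complex.one_re, Complex.one_im, Complex.I_re, Complex.I_im,
      Complex.reCLM_apply, Complex.imCLM_apply]
    ring
  have hB2 : HasFDerivAt (fun w : ℂ => 2 * (w.im - p.im))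
      ((2:ℝ) • (Complex.imCLM : ℂ →L[ℝ] ℝ)) z :=
    (Complex.imCLM.hasFDerivAt.sub_const p.im).const_mul 2
  have hM2 := (A_hasFDerivAt p hz).fun_mul hB2
  have hev2 : (fun w => fderiv ℝ (hbar p c) w Complex.I)
      =ᶠ[𝓝 z] (fun w => -((Sfun p w)^2)⁻¹ * (2 * (w.im - p.im))) := by
    filter_upwards [hopen] with w hw
    rw [hbar_fderiv_apply p c hw Complex.I]
    simp
  have hterm2 : fderiv ℝ (fun w => fderiv ℝ (hbar p c) w Complex.I) z Complex.I
      = -((Sfun p z)^2)⁻¹ * 2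
        + (2 * (z.im - p.im)) * ((2 * Sfun p z / ((Sfun p z)^2)^2) * (2 * (z.im - p.im))) := by
    rw [hev2.fderiv_eq, hM2.fderiv]
    simp only [ContinuousLinearMap.add_apply, ContinuousLinearMap.smul_apply, LSp_apply,
      smul_eq_mul, Complex.one_re, Complex.one_im, Complex.I_re, Complex.I_im,
      Complex.reCLM_apply, Complex.imCLM_apply]
    ring
  unfold laplacian
  rw [hterm1, hterm2]
  set X := z.re - p.re with hX
  set Y := z.im - p.im with hY
  have hS : Sfun p z = X * X + Y * Y := rfl
  rw [hS] at hSne ⊢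
  have hS2 : X ^ 2 + Y ^ 2 ≠ 0 := by rwa [sq, sq]
  field_simp
  ring

end Barrier

section MoreHelpers

lemma cosh_one_lt_two : Real.cosh 1 < 2 := by
  rw [Real.cosh_eq]
  have h1 : Real.exp 1 < 2.7182818286 := Real.exp_one_lt_d9
  have h2 : Real.exp (-1) < 1 := Real.exp_lt_one_iff.mpr (by norm_num)
  norm_num
  linarith

lemma sinh_le_two_mul {t : ℝ} (h0 : 0 ≤ t) (h1 : t ≤ 1) : Real.sinh t ≤ 2 * t := by
  have key : ∀ s ∈ Icc (0:ℝ) 1, ∀ r ∈ Icc (0:ℝ) 1, s ≤ r →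
      2 * s - Real.sinh s ≤ 2 * r - Real.sinh r := by
    have hder : ∀ s : ℝ, HasDerivAt (fun x => 2 * x - Real.sinh x) (2 - Real.cosh s) s :=
      fun s => (((hasDerivAt_id s).const_mul 2).sub (Real.hasDerivAt_sinh s)).congr_deriv (by simp)
    have := monotoneOn_of_deriv_nonneg (convex_Icc (0:ℝ) 1)
      (fun s hs => ((hder s).continuousAt).continuousWithinAt)
      (fun s hs => ((hder s).differentiableAt).differentiableWithinAt)
      (fun s hs => by
        rw [(hder s).deriv]
        rw [interior_Icc] at hs
        have : Real.cosh s ≤ Real.cosh 1 := by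
          rw [Real.cosh_le_cosh]
          rw [abs_of_nonneg hs.1.le, abs_one]
          exact hs.2.le
        linarith [cosh_one_lt_two])
    exact fun s hs r hr hsr => this hs hr hsr
  have := key 0 (by simp) t ⟨h0, h1⟩ h0
  simp [Real.sinh_zero] at this
  linarith

lemma deriv_nonpos_right {g : ℝ → ℝ} {a b : ℝ} (hg : HasDerivAt g a 0) (hb : 0 < b)
    (h : ∀ t ∈ Ioc (0:ℝ) b, g t ≤ g 0) : a ≤ 0 := by
  have hslope : Tendsto (slope g 0) (𝓝[>] (0:ℝ)) (𝓝 a) :=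
    (hasDerivAt_iff_tendsto_slope.mp hg).mono_left
      (nhdsWithin_mono 0 (fun t ht => ne_of_gt ht))
  refine le_of_tendsto hslope ?_
  filter_upwards [Ioc_mem_nhdsGT_of_mem ⟨le_refl (0:ℝ), hb⟩] with t ht
  have hs : slope g 0 t = (g t - g 0) / t := by simp [slope, div_eq_inv_mul]
  rw [hs]
  apply div_nonpos_of_nonpos_of_nonneg
  · linarith [h t ht]
  · exact ht.1.le

lemma final_numeric {CK m uy S D Ky sh : ℝ}
    (hCK0 : 0 ≤ CK) (hm : 0 < m)
    (hDpos : 0 < D) (hDlt : D < (CK+1)⁻¹)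
    (hS2 : S ≤ D) (hSpos : 0 < S)
    (huy : -m ≤ uy)
    (hKy : Ky ≤ CK)
    (hsh : uy ≤ sh) (hshnp : sh ≤ 0) :
    0 < Ky * sh + (m * D / 3) * (4 * (S^2)⁻¹) := by
  have hstep1 : CK * sh ≤ Ky * sh := mul_le_mul_of_nonpos_right hKy hshnp
  have hstep2 : CK * uy ≤ CK * sh := mul_le_mul_of_nonneg_left hsh hCK0
  have hstep3 : -(CK * m) ≤ CK * uy := by nlinarith
  have hinv : (D*D)⁻¹ ≤ (S^2)⁻¹ := by
    apply inv_anti₀ (pow_pos hSpos 2)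
    nlinarith
  have hDinv : 0 < D⁻¹ := inv_pos.mpr hDpos
  have hcancel : D * D⁻¹ = 1 := mul_inv_cancel₀ hDpos.ne'
  have hCK1 : (0:ℝ) < CK + 1 := by linarith
  have hck1 : (CK+1) * (CK+1)⁻¹ = 1 := mul_inv_cancel₀ hCK1.ne'
  have hDD : D * (CK+1) < 1 := by nlinarith [mul_lt_mul_of_pos_right hDlt hCK1]
  have hDD1 : CK + 1 < D⁻¹ := by nlinarith [mul_lt_mul_of_pos_right hDD hDinv]
  have hkey : CK * m < (m * D / 3) * (4 * (D*D)⁻¹) := by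
    have hrw : (m * D / 3) * (4 * (D*D)⁻¹) = 4/3 * m * D⁻¹ := by
      field_simp
    rw [hrw]
    nlinarith
  have h10 : (m * D / 3) * (4 * (D*D)⁻¹) ≤ (m * D / 3) * (4 * (S^2)⁻¹) := by
    have hεnn : 0 ≤ m * D / 3 := by positivity
    nlinarith [mul_le_mul_of_nonneg_left hinv hεnn]
  linarith

end MoreHelpers

set_option maxHeartbeats 1000000 in
/-- Maximum principle for the sinh-Gordon type equation: if `u` is continuous on the
closure of a nonempty bounded open set `U`, twice continuously differentiable on `U`,
solves `Δu = K · sinh(u/2)` on `U` with `K ≥ 0` continuous on the closure of `U`,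
and `u < 0` on the frontier of `U`, then `u < 0` throughout `U`. -/
theorem max_principle_sinh_gordon (U : Set ℂ) (hne : U.Nonempty) (hU : IsOpen U)
    (hbd : Bornology.IsBounded U) (u K : ℂ → ℝ)
    (hu_cont : ContinuousOn u (closure U)) (hu_C2 : ContDiffOn ℝ 2 u U)
    (hK_cont : ContinuousOn K (closure U)) (hK_nonneg : ∀ z ∈ U, 0 ≤ K z)
    (heq : ∀ z ∈ U, laplacian u z = K z * Real.sinh (u z / 2))
    (hbdry : ∀ z ∈ frontier U, u z < 0) :
    ∀ z ∈ U, u z < 0 := by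
  -- a bound on the closure of U
  obtain ⟨R, hRsub⟩ := (hbd.closure).subset_closedBall 0
  have hR0 : 0 ≤ R := by
    obtain ⟨x, hx⟩ := hne
    have := hRsub (subset_closure hx)
    rw [mem_closedBall] at this
    linarith [dist_nonneg (x := x) (y := 0)]
  have hre2 : ∀ z ∈ closure U, z.re * z.re ≤ R * R := by
    intro z hz
    have h1 : ‖z‖ ≤ R := by
      have := hRsub hz
      rwa [mem_closedBall, dist_zero_right] at this
    have h2 : |z.re| ≤ ‖z‖ := Complex.abs_re_le_norm z
    nlinarith [abs_nonneg z.re, le_abs_self z.re, neg_abs_le z.re]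
  -- Step 1 : weak maximum principle, u ≤ 0 on U
  have hle : ∀ z ∈ U, u z ≤ 0 := by
    by_contra hcon
    push_neg at hcon
    obtain ⟨z₀, hz₀U, hz₀⟩ := hcon
    set V : Set ℂ := U ∩ u ⁻¹' (Ioi 0) with hV
    have hVopen : IsOpen V := (hu_C2.continuousOn).isOpen_inter_preimage hU isOpen_Ioi
    have hz₀V : z₀ ∈ V := ⟨hz₀U, hz₀⟩
    set ε := u z₀ / (2 * (R * R + 1)) with hε
    have hεpos : 0 < ε := by
      apply div_pos hz₀
      nlinarith
    set v : ℂ → ℝ := fun z => u z + ε * (z.re * z.re) with hv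
    have hgC2 : ContDiffOn ℝ 2 (fun x : ℂ => ε * (x.re * x.re)) U :=
      (contDiff_const.mul contdiff_resq).contDiffOn
    have hvC2 : ContDiffOn ℝ 2 v U := hu_C2.add hgC2
    have hclVU : closure V ⊆ closure U := closure_mono inter_subset_left
    have hvcont : ContinuousOn v (closure V) :=
      (hu_cont.mono hclVU).add
        ((continuous_const.mul (Complex.continuous_re.mul Complex.continuous_re)).continuousOn)
    have hVc : IsCompact (closure V) :=
      Metric.isCompact_of_isClosed_isBounded isClosed_closure
        ((hbd.subset inter_subset_left).closure)
    obtain ⟨p, hpcl, hpmax⟩ := hVc.exists_isMaxOn ⟨z₀, subset_closure hz₀V⟩ hvcont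
    have hbound : ∀ z, z ∈ closure V → z ∉ V → u z ≤ 0 := by
      intro z hzc hznV
      by_cases hzU : z ∈ U
      · by_contra hc
        push_neg at hc
        exact hznV ⟨hzU, hc⟩
      · have hzfr : z ∈ frontier U := by
          rw [frontier, hU.interior_eq]
          exact ⟨hclVU hzc, hzU⟩
        exact (hbdry z hzfr).le
    have hpV : p ∈ V := by
      by_contra hpV
      have h1 : u p ≤ 0 := hbound p hpcl hpV
      have h2 : v z₀ ≤ v p := hpmax (subset_closure hz₀V)
      have h3 := hre2 p (hclVU hpcl)
      have h4 := hre2 z₀ (subset_closure hz₀U)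
      have h5 : ε * (R * R) < u z₀ := by
        rw [hε, div_mul_eq_mul_div, div_lt_iff₀ (by nlinarith : (0:ℝ) < 2 * (R * R + 1))]
        nlinarith
      have h6 : v p ≤ ε * (R * R) := by
        have : ε * (p.re * p.re) ≤ ε * (R * R) := by nlinarith
        simp only [hv]
        linarith
      have h7 : u z₀ ≤ v z₀ := by
        simp only [hv]
        nlinarith [mul_self_nonneg z₀.re]
      linarith
    have hlocmax : IsLocalMax v p := by
      filter_upwards [hVopen.eventually_mem hpV] with x hx
      exact hpmax (subset_closure hx)
    have hlap : laplacian v p ≤ 0 := laplacian_nonpos hU hvC2 hpV.1 hlocmax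
    have hlapeq : laplacian v p = laplacian u p + ε * 2 := by
      rw [show v = fun z => u z + (fun x : ℂ => ε * (x.re * x.re)) z from rfl]
      rw [laplacian_add hU hu_C2 hgC2 hpV.1,
        laplacian_const_mul hU contdiff_resq.contDiffOn hpV.1 ε, laplacian_re_sq]
    have hlapu : laplacian u p = K p * Real.sinh (u p / 2) := heq p hpV.1
    have hsinh : 0 < Real.sinh (u p / 2) := Real.sinh_pos_iff.mpr (by
      have := hpV.2
      rw [mem_preimage, mem_Ioi] at this
      linarith)
    have hK := hK_nonneg p hpV.1
    nlinarith [mul_nonneg hK hsinh.le]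
  -- Step 2 : strict inequality
  set Z : Set ℂ := {z | z ∈ U ∧ u z = 0} with hZ
  have hZU : Z ⊆ U := fun z hz => hz.1
  have hZero : ∀ q ∈ closure Z, u q = 0 := by
    intro q hq
    have hqU : q ∈ closure U := closure_mono hZU hq
    have hcw : ContinuousWithinAt u Z q := (hu_cont q hqU).mono (subset_closure.trans
      (closure_mono hZU))
    have hne' : (𝓝[Z] q).NeBot := mem_closure_iff_nhdsWithin_neBot.mp hq
    have ht1 : Tendsto u (𝓝[Z] q) (𝓝 (u q)) := hcw
    have ht2 : Tendsto u (𝓝[Z] q) (𝓝 0) := by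
      apply Tendsto.congr' _ tendsto_const_nhds
      filter_upwards [self_mem_nhdsWithin] with x hx
      exact hx.2.symm
    exact tendsto_nhds_unique ht1 ht2
  have hZopen : IsOpen Z := by
    rw [Metric.isOpen_iff]
    intro z₀ hz₀
    obtain ⟨ρ, hρpos, hρ⟩ := Metric.isOpen_iff.mp hU z₀ hz₀.1
    have hclUc : IsCompact (closure U) :=
      Metric.isCompact_of_isClosed_isBounded isClosed_closure hbd.closure
    obtain ⟨mK, hmKcl, hmKmax⟩ := hclUc.exists_isMaxOn ⟨z₀, subset_closure hz₀.1⟩ hK_cont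
    set CK := max (K mK) 0 with hCK
    have hCK0 : 0 ≤ CK := le_max_right _ _
    have hCKb : ∀ x ∈ closure U, K x ≤ CK := fun x hx => le_trans (hmKmax hx) (le_max_left _ _)
    have hsq : 0 < Real.sqrt (CK + 1) := Real.sqrt_pos.mpr (by linarith)
    set η := min (ρ/4) ((Real.sqrt (CK+1))⁻¹) with hη
    have hηpos : 0 < η := lt_min (by linarith) (inv_pos.mpr hsq)
    have hηρ : η ≤ ρ/4 := min_le_left _ _
    refine ⟨η, hηpos, ?_⟩
    intro p hpball
    rw [mem_ball] at hpball
    have hpU : p ∈ U := hρ (by rw [mem_ball]; linarith)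
    by_contra hpZ
    have hup : u p < 0 := lt_of_le_of_ne (hle p hpU) (fun h => hpZ ⟨hpU, h⟩)
    set W : Set ℂ := U ∩ u ⁻¹' (Iio 0) with hW
    have hWopen : IsOpen W := (hu_C2.continuousOn).isOpen_inter_preimage hU isOpen_Iio
    have hpW : p ∈ W := ⟨hpU, by rw [mem_preimage, mem_Iio]; exact hup⟩
    set F := Wᶜ with hF
    have hFclosed : IsClosed F := hWopen.isClosed_compl
    have hz₀F : z₀ ∈ F := by
      intro hzw
      have h1 := hzw.2
      rw [mem_preimage, mem_Iio, hz₀.2] at h1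
      exact lt_irrefl 0 h1
    have hFne : F.Nonempty := ⟨z₀, hz₀F⟩
    set δ := Metric.infDist p F with hδ
    have hδpos : 0 < δ := (IsClosed.notMem_iff_infDist_pos hFclosed hFne).mp
      (notMem_compl_iff.mpr hpW)
    have hδη : δ < η := lt_of_le_of_lt (Metric.infDist_le_dist_of_mem hz₀F) hpball
    have hDlt : δ * δ < (CK + 1)⁻¹ := by
      have h1 : δ < (Real.sqrt (CK+1))⁻¹ := lt_of_lt_of_le hδη (min_le_right _ _)
      have h2 : Real.sqrt (CK+1) * Real.sqrt (CK+1) = CK + 1 :=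
        Real.mul_self_sqrt (by linarith)
      have h3 : (Real.sqrt (CK+1))⁻¹ * (Real.sqrt (CK+1))⁻¹ = (CK+1)⁻¹ := by
        rw [← mul_inv, h2]
      rw [← h3]
      have h4 : 0 < (Real.sqrt (CK+1))⁻¹ := inv_pos.mpr hsq
      nlinarith
    have hballW : ball p δ ⊆ W := by
      intro x hx
      by_contra hxW
      have h1 : δ ≤ dist p x := Metric.infDist_le_dist_of_mem (hxW : x ∈ F)
      rw [mem_ball, dist_comm] at hx
      linarith
    obtain ⟨q, hqF, hqd⟩ := hFclosed.exists_infDist_eq_dist hFne p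
    have hdq : dist p q = δ := hqd.symm
    have hqp : dist q p = δ := by rw [dist_comm]; exact hdq
    have hqU : q ∈ U := by
      apply hρ
      rw [mem_ball]
      have htri := dist_triangle q p z₀
      linarith
    have hqu : u q = 0 := by
      refine le_antisymm (hle q hqU) ?_
      by_contra hc
      push_neg at hc
      exact hqF ⟨hqU, by rw [mem_preimage, mem_Iio]; exact hc⟩
    have hqnep : q ≠ p := by
      intro h
      rw [h, dist_self] at hqp
      linarith
    have hcbU : closedBall p δ ⊆ U := by
      intro x hx
      apply hρ
      rw [mem_ball]
      rw [mem_closedBall] at hx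
      have htri := dist_triangle x p z₀
      linarith
    have hqmax : IsLocalMax u q := by
      filter_upwards [hU.eventually_mem hqU] with x hx
      rw [hqu]
      exact hle x hx
    have hfderivu : fderiv ℝ u q = 0 := hqmax.fderiv_eq_zero
    -- inner sphere
    have hsphW : sphere p (δ/2) ⊆ W := by
      intro x hx
      apply hballW
      rw [mem_ball]
      rw [mem_sphere] at hx
      linarith
    obtain ⟨m, hmsph, hmmax⟩ := (isCompact_sphere p (δ/2)).exists_isMaxOn
      (NormedSpace.sphere_nonempty.mpr (by positivity))
      ((hu_C2.continuousOn).mono (fun x hx => (hsphW hx).1))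
    have hum : u m < 0 := by
      have := (hsphW hmsph).2
      rwa [mem_preimage, mem_Iio] at this
    set a := -(u m) with ha
    have hapos : 0 < a := by linarith
    set D := δ * δ with hD
    have hDpos : 0 < D := mul_pos hδpos hδpos
    set c := D⁻¹ with hc
    have hmin : 0 < min a 1 := lt_min hapos one_pos
    set ε := min a 1 * D / 3 with hε
    have hεpos : 0 < ε := div_pos (mul_pos hmin hDpos) (by norm_num)
    set w : ℂ → ℝ := fun z => u z + ε * hbar p c z with hw
    set A : Set ℂ := closedBall p δ \ ball p (δ/2) with hA
    have hAU : A ⊆ U := fun x hx => hcbU hx.1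
    have hAnp : ∀ x ∈ A, x ≠ p := by
      intro x hx h
      apply hx.2
      rw [h, mem_ball, dist_self]
      positivity
    have hSbounds : ∀ x ∈ A, D/4 ≤ Sfun p x ∧ Sfun p x ≤ D := by
      intro x hx
      have h1 : dist x p ≤ δ := mem_closedBall.mp hx.1
      have h2 : δ/2 ≤ dist x p := not_lt.mp (fun hlt => hx.2 (mem_ball.mpr hlt))
      rw [Sfun_eq_dist, hD]
      constructor
      · nlinarith [dist_nonneg (x:=x) (y:=p)]
      · nlinarith [dist_nonneg (x:=x) (y:=p)]
    have hbarBounds : ∀ x ∈ A, 0 ≤ hbar p c x ∧ hbar p c x ≤ 3 * D⁻¹ := by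
      intro x hx
      obtain ⟨h1, h2⟩ := hSbounds x hx
      have hSpos := Sfun_pos p (hAnp x hx)
      unfold hbar
      rw [hc]
      constructor
      · have h3 : D⁻¹ ≤ (Sfun p x)⁻¹ := by
          apply inv_anti₀ hSpos h2
        linarith
      · have h3 : (Sfun p x)⁻¹ ≤ (D/4)⁻¹ := inv_anti₀ (by linarith) h1
        have h4 : (D/4)⁻¹ = 4 * D⁻¹ := by
          rw [inv_div]
          ring
        have h5 : 0 < D⁻¹ := inv_pos.mpr hDpos
        linarith
    have hwval : ∀ x, w x = u x + ε * hbar p c x := fun x => rfl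
    have hwA : ∀ x ∈ A, w x ≤ 0 := by
      have hAcomp : IsCompact A := (isCompact_closedBall p δ).diff isOpen_ball
      have hqA : q ∈ A := ⟨mem_closedBall.mpr (le_of_eq hqp), fun hq => by
        rw [mem_ball, hqp] at hq; linarith⟩
      have hwcont : ContinuousOn w A := by
        apply ContinuousOn.add ((hu_C2.continuousOn).mono hAU)
        exact continuousOn_const.mul (((hbar_contDiffOn p c).continuousOn).mono
          (fun x hx => hAnp x hx))
      obtain ⟨y, hyA, hymax⟩ := hAcomp.exists_isMaxOn ⟨q, hqA⟩ hwcont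
      suffices hy : w y ≤ 0 by intro x hx; exact le_trans (hymax hx) hy
      by_contra hywpos
      push_neg at hywpos
      have hywpos' : 0 < u y + ε * hbar p c y := by rw [← hwval y]; exact hywpos
      have hyU : y ∈ U := hAU hyA
      have hynp : y ≠ p := hAnp y hyA
      have h1 : dist y p ≤ δ := mem_closedBall.mp hyA.1
      have h2 : δ/2 ≤ dist y p := not_lt.mp (fun hlt => hyA.2 (mem_ball.mpr hlt))
      rcases eq_or_lt_of_le h1 with houter | houter
      · -- outer sphere : hbar vanishes, w = u ≤ 0
        have hSy : Sfun p y = D := by rw [Sfun_eq_dist, houter, hD]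
        have hbar0 : hbar p c y = 0 := by
          unfold hbar
          rw [hSy, hc, sub_self]
        rw [hbar0] at hywpos'
        simp only [mul_zero, add_zero] at hywpos'
        exact absurd hywpos' (not_lt.mpr (hle y hyU))
      rcases eq_or_lt_of_le h2 with hinner | hinner
      · -- inner sphere
        have hysph : y ∈ sphere p (δ/2) := by rw [mem_sphere]; exact hinner.symm
        have hyum : u y ≤ u m := hmmax hysph
        have hSy : Sfun p y = D/4 := by
          rw [Sfun_eq_dist, ← hinner, hD]
          ring
        have hbareq : hbar p c y = 3 * D⁻¹ := by
          unfold hbar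
          rw [hSy, hc, inv_div, div_eq_mul_inv]
          ring
        have hε3 : ε * (3 * D⁻¹) = min a 1 := by
          rw [hε]
          field_simp
        rw [hbareq] at hywpos'
        have hmla := min_le_left a 1
        rw [hε3] at hywpos'
        linarith
      · -- interior of the annulus
        have hoy : y ∈ ball p δ \ closedBall p (δ/2) := ⟨mem_ball.mpr houter, fun hcb => by
          rw [mem_closedBall] at hcb
          linarith⟩
        have hoopen : IsOpen (ball p δ \ closedBall p (δ/2)) :=
          isOpen_ball.sdiff Metric.isClosed_closedBall
        have hsubA : ball p δ \ closedBall p (δ/2) ⊆ A := fun x hx =>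
          ⟨ball_subset_closedBall hx.1, fun hb => hx.2 (ball_subset_closedBall hb)⟩
        have hlocmax : IsLocalMax w y := by
          filter_upwards [hoopen.eventually_mem hoy] with x hx
          exact hymax (hsubA hx)
        have hU'open : IsOpen (U \ {p}) := hU.sdiff isClosed_singleton
        have hyU' : y ∈ U \ {p} := ⟨hyU, by simp [hynp]⟩
        have hbarmono : ContDiffOn ℝ 2 (hbar p c) (U \ {p}) :=
          (hbar_contDiffOn p c).mono (fun x hx => hx.2)
        have hbarC2 : ContDiffOn ℝ 2 (fun x => ε * hbar p c x) (U \ {p}) :=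
          contDiffOn_const.mul hbarmono
        have hwC2 : ContDiffOn ℝ 2 w (U \ {p}) := (hu_C2.mono diff_subset).add hbarC2
        have hlap : laplacian w y ≤ 0 := laplacian_nonpos hU'open hwC2 hyU' hlocmax
        have hlapeq : laplacian w y
            = K y * Real.sinh (u y / 2) + ε * (4 * ((Sfun p y)^2)⁻¹) := by
          rw [hw, laplacian_add hU'open (hu_C2.mono diff_subset) hbarC2 hyU',
            laplacian_const_mul hU'open hbarmono hyU' ε,
            laplacian_hbar p c hynp, heq y hyU]
        obtain ⟨hS1, hS2⟩ := hSbounds y hyA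
        obtain ⟨hb1, hb2⟩ := hbarBounds y hyA
        have huy_le : u y ≤ 0 := hle y hyU
        have hε3 : ε * (3 * D⁻¹) = min a 1 := by
          rw [hε]
          field_simp
        have huy_lb : -(min a 1) ≤ u y := by
          have h5 : ε * hbar p c y ≤ ε * (3 * D⁻¹) :=
            mul_le_mul_of_nonneg_left hb2 hεpos.le
          rw [hε3] at h5
          linarith
        have hsinh_lb : u y ≤ Real.sinh (u y / 2) := by
          have hmle : min a 1 ≤ 1 := min_le_right a 1
          have h7 : 0 ≤ -(u y / 2) := by linarith
          have h8 : -(u y / 2) ≤ 1 := by linarith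
          have h9 := sinh_le_two_mul h7 h8
          rw [Real.sinh_neg] at h9
          linarith
        have hsinh_np : Real.sinh (u y / 2) ≤ 0 := Real.sinh_nonpos_iff.mpr (by linarith)
        have hKy : K y ≤ CK := hCKb y (subset_closure hyU)
        have hSpos := Sfun_pos p hynp
        have hfinal := final_numeric hCK0 hmin hDpos hDlt hS2 hSpos huy_lb hKy
          hsinh_lb hsinh_np
        rw [hε] at hlapeq
        linarith
    -- the barrier has positive inward derivative at q, contradicting fderiv u q = 0
    have hbarq : hbar p c q = 0 := by
      unfold hbar
      rw [Sfun_eq_dist, hqp, hc, hD, sub_self]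
    set d : ℂ := (δ⁻¹ : ℝ) • (p - q) with hd
    have hδc : δ * δ⁻¹ = 1 := mul_inv_cancel₀ hδpos.ne'
    have hline : ∀ t : ℝ, q + t • d - p = (1 - t/δ) • (q - p) := by
      intro t
      rw [hd, smul_smul]
      have ht : t * δ⁻¹ = t/δ := (div_eq_mul_inv t δ).symm
      rw [ht]
      module
    have hnormqp : ‖q - p‖ = δ := by rw [← dist_eq_norm]; exact hqp
    have hmemA : ∀ t ∈ Icc (0:ℝ) (δ/2), q + t • d ∈ A := by
      intro t ht
      have htδ : t/δ ≤ 1 := by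
        rw [div_le_one hδpos]
        linarith [ht.2]
      have hdist : dist (q + t • d) p = δ - t := by
        rw [dist_eq_norm, hline t, norm_smul, Real.norm_eq_abs, hnormqp,
          abs_of_nonneg (by linarith : (0:ℝ) ≤ 1 - t/δ)]
        field_simp
      constructor
      · rw [mem_closedBall, hdist]
        linarith [ht.1]
      · intro hb
        rw [mem_ball, hdist] at hb
        linarith [ht.2]
    set g : ℝ → ℝ := fun t => w (q + t • d) with hgdef
    have hg0 : g 0 = 0 := by
      rw [hgdef]
      simp only [zero_smul, add_zero]
      rw [hwval q, hqu, hbarq]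
      ring
    have hgle : ∀ t ∈ Ioc (0:ℝ) (δ/2), g t ≤ g 0 := by
      intro t ht
      rw [hg0]
      exact hwA _ (hmemA t ⟨ht.1.le, ht.2⟩)
    have hLd : HasDerivAt (fun t : ℝ => q + t • d) d 0 := by
      simpa using ((hasDerivAt_id (0:ℝ)).smul_const d).const_add q
    have hudiff : DifferentiableAt ℝ u q :=
      (hu_C2.contDiffAt (hU.mem_nhds hqU)).differentiableAt (by norm_num)
    have hu0 : HasFDerivAt u (fderiv ℝ u q) (q + (0:ℝ) • d) := by
      simpa using hudiff.hasFDerivAt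
    have hb0 : HasFDerivAt (hbar p c) ((-((Sfun p q)^2)⁻¹) • LSp p q) (q + (0:ℝ) • d) := by
      simpa using hbar_hasFDerivAt p c hqnep
    have hgd : HasDerivAt g
        ((fderiv ℝ u q) d + ε * (((-((Sfun p q)^2)⁻¹) • LSp p q) d)) 0 :=
      (hu0.comp_hasDerivAt 0 hLd).add ((hb0.comp_hasDerivAt 0 hLd : HasDerivAt (hbar p c ∘ fun t : ℝ => q + t • d) _ 0).const_mul ε)
    have hdre : d.re = δ⁻¹ * (p.re - q.re) := by rw [hd]; simp
    have hdim : d.im = δ⁻¹ * (p.im - q.im) := by rw [hd]; simp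
    have hSq : Sfun p q = δ * δ := by rw [Sfun_eq_dist, hqp]
    have hSq2 : (q.re - p.re) * (q.re - p.re) + (q.im - p.im) * (q.im - p.im) = δ * δ := hSq
    have hvalpos : 0 < (((-((Sfun p q)^2)⁻¹) • LSp p q) d) := by
      rw [ContinuousLinearMap.smul_apply, LSp_apply, smul_eq_mul, hdre, hdim, hSq]
      have hinner : 2 * (q.re - p.re) * (δ⁻¹ * (p.re - q.re))
          + 2 * (q.im - p.im) * (δ⁻¹ * (p.im - q.im)) = -2 * δ⁻¹ * (δ * δ) := by
        linear_combination (-2 * δ⁻¹) * hSq2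
      rw [hinner]
      have hrw2 : -((δ*δ)^2)⁻¹ * (-2 * δ⁻¹ * (δ * δ)) = 2 * δ⁻¹ * (δ*δ) * ((δ*δ)^2)⁻¹ := by
        ring
      rw [hrw2]
      positivity
    have hnonpos := deriv_nonpos_right hgd (by positivity : (0:ℝ) < δ/2) hgle
    rw [hfderivu, ContinuousLinearMap.zero_apply] at hnonpos
    nlinarith [mul_pos hεpos hvalpos]
  intro z hzU
  rcases lt_or_eq_of_le (hle z hzU) with h | h
  · exact h
  exfalso
  have hzZ : z ∈ Z := ⟨hzU, h⟩
  by_cases hcls : closure Z ⊆ Z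
  · have hZclosed : IsClosed Z := isClosed_of_closure_subset hcls
    rcases isClopen_iff.mp ⟨hZclosed, hZopen⟩ with hZe | hZuniv
    · rw [hZe] at hzZ
      exact hzZ
    · have : ((R + 1 : ℝ) : ℂ) ∈ Z := by rw [hZuniv]; trivial
      have h1 := hRsub (subset_closure (hZU this))
      rw [mem_closedBall, dist_zero_right] at h1
      rw [Complex.norm_real, Real.norm_eq_abs] at h1
      have := le_abs_self (R + 1)
      linarith
  · rw [not_subset] at hcls
    obtain ⟨q, hqcl, hqZ⟩ := hcls
    have hqu : u q = 0 := hZero q hqcl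
    have hqU' : q ∈ closure U := closure_mono hZU hqcl
    by_cases hqU : q ∈ U
    · exact hqZ ⟨hqU, hqu⟩
    · have : q ∈ frontier U := by
        rw [frontier, hU.interior_eq]
        exact ⟨hqU', hqU⟩
      linarith [hbdry q this]
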